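/- In the high-transfer-price setting with τ₁ > 0, the function P(t) := p̄ + ((t−τ₁)/((1−exp(−λ))·(1+z)·t·(1+1/γ)))^γ · (p^∨ − p̄) is twice differentiable on (τ₁,1], and its second derivative satisfies P''(t) = P'(t) · ((γ−1)·t − (γ+1)·(t−τ₁)) / (t·(t−τ₁)); in particular, since P'(t) > 0 and the multiplier ((γ−1)·t − (γ+1)·(t−τ₁))/(t·(t−τ₁)) < 0, the second derivative P''(t) is strictly negative, i.e. the slope of the variation of the optimal price with the tax rate is opposite to the profit-shifting direction. -/

import Mathlib

open Real Set Filter Topology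

/-- In the high-transfer-price setting with `τ₁ > 0`, the optimal-transfer-price
function `P` is twice differentiable on `(τ₁,1]` with
`P''(t) = P'(t)·((γ−1)·t − (γ+1)·(t−τ₁))/(t·(t−τ₁))`; since `P'(t) > 0` and the
multiplier is negative, `P''(t) < 0`. -/
theorem stmt5 (τ₁ lam z γ pbar pvee : ℝ)
    (hτ₁ : τ₁ ∈ Set.Ioo (0 : ℝ) 1)
    (hlam : 0 < lam) (hz : 0 < z) (hγ : γ ∈ Set.Ioc (0 : ℝ) 1) (hp : pbar < pvee)
    (P : ℝ → ℝ)
    (hP : P = fun t => pbar +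
      ((t - τ₁) / ((1 - Real.exp (-lam)) * (1 + z) * t * (1 + 1 / γ))) ^ γ * (pvee - pbar)) :
    ∀ t ∈ Set.Ioc τ₁ 1,
      DifferentiableAt ℝ P t ∧
      DifferentiableAt ℝ (deriv P) t ∧
      deriv (deriv P) t =
        deriv P t * (((γ - 1) * t - (γ + 1) * (t - τ₁)) / (t * (t - τ₁))) ∧
      0 < deriv P t ∧
      ((γ - 1) * t - (γ + 1) * (t - τ₁)) / (t * (t - τ₁)) < 0 ∧
      deriv (deriv P) t < 0 := by
  obtain ⟨hτ0, hτ1⟩ := hτ₁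
  obtain ⟨hγ0, hγ1⟩ := hγ
  have hkpos : 0 < (1 - Real.exp (-lam)) * (1 + z) := by
    have : Real.exp (-lam) < 1 := Real.exp_lt_one_iff.2 (by linarith)
    nlinarith
  set k : ℝ := (1 - Real.exp (-lam)) * (1 + z) with hkdef
  have hm : (0:ℝ) < 1 + 1/γ := by positivity
  set m : ℝ := 1 + 1/γ with hmdef
  set A : ℝ := pvee - pbar with hAdef
  have hA : 0 < A := sub_pos.2 hp
  set u : ℝ → ℝ := fun s => (s - τ₁) / (k * s * m) with hu
  have hP2 : P = fun x => pbar + u x ^ γ * A := by rw [hP]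
  set g : ℝ → ℝ := fun s => γ * u s ^ (γ - 1) * (τ₁ / (k * m * s ^ 2)) * A with hg
  -- first derivative
  have hPderiv : ∀ s, τ₁ < s → HasDerivAt P (g s) s := by
    intro s hs
    have hs0 : 0 < s := hτ0.trans hs
    have hus : 0 < u s := by
      simp only [hu]; exact div_pos (sub_pos.2 hs) (by positivity)
    have hden : HasDerivAt (fun x : ℝ => k * x * m) (k * m) s := by
      simpa using ((hasDerivAt_id s).const_mul k).mul_const m
    have hnum : HasDerivAt (fun x : ℝ => x - τ₁) 1 s := (hasDerivAt_id s).sub_const τ₁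
    have hu' : HasDerivAt u ((1 * (k * s * m) - (s - τ₁) * (k * m)) / (k * s * m) ^ 2) s :=
      hnum.div hden (by positivity)
    have hu'2 : HasDerivAt u (τ₁ / (k * m * s ^ 2)) s := by
      convert hu' using 1
      field_simp
      ring
    have hrpow := hu'2.rpow_const (p := γ) (Or.inl hus.ne')
    have h := (hrpow.mul_const A).const_add pbar
    rw [hP2]
    refine h.congr_deriv ?_
    simp only [hg]
    ring
  -- second derivative
  have hgderiv : ∀ s, τ₁ < s →
      HasDerivAt g (g s * (((γ - 1) * s - (γ + 1) * (s - τ₁)) / (s * (s - τ₁)))) s := by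
    intro s hs
    have hs0 : 0 < s := hτ0.trans hs
    have hus : 0 < u s := by
      simp only [hu]; exact div_pos (sub_pos.2 hs) (by positivity)
    have hden : HasDerivAt (fun x : ℝ => k * x * m) (k * m) s := by
      simpa using ((hasDerivAt_id s).const_mul k).mul_const m
    have hnum : HasDerivAt (fun x : ℝ => x - τ₁) 1 s := (hasDerivAt_id s).sub_const τ₁
    have hu' : HasDerivAt u ((1 * (k * s * m) - (s - τ₁) * (k * m)) / (k * s * m) ^ 2) s :=
      hnum.div hden (by positivity)
    have hu'2 : HasDerivAt u (τ₁ / (k * m * s ^ 2)) s := by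
      convert hu' using 1
      field_simp
      ring
    have h1 := hu'2.rpow_const (p := γ - 1) (Or.inl hus.ne')
    have hden2 : HasDerivAt (fun x : ℝ => k * m * x ^ 2) (k * m * (2 * s ^ 1)) s :=
      (hasDerivAt_pow 2 s).const_mul (k * m) |>.congr_deriv (by push_cast; ring)
    have h3 : HasDerivAt (fun x : ℝ => τ₁ / (k * m * x ^ 2))
        ((0 * (k * m * s ^ 2) - τ₁ * (k * m * (2 * s ^ 1))) / (k * m * s ^ 2) ^ 2) s :=
      (hasDerivAt_const s τ₁).div hden2 (by positivity)
    have h := (((h1.const_mul γ).mul h3).mul_const A)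
    refine h.congr_deriv ?_
    have hrw : u s ^ (γ - 1 - 1) = u s ^ (γ - 1) / u s := by
      rw [Real.rpow_sub hus, Real.rpow_one]
    rw [hrw]
    simp only [hg, hu]
    have h1 : s - τ₁ ≠ 0 := (sub_pos.2 hs).ne'
    field_simp
    ring
  intro t ht
  obtain ⟨htτ, ht1⟩ := ht
  have ht0 : 0 < t := hτ0.trans htτ
  have hmem : Ioi τ₁ ∈ 𝓝 t := isOpen_Ioi.mem_nhds htτ
  have hEq : deriv P =ᶠ[𝓝 t] g :=
    Filter.eventually_of_mem hmem (fun s hs => (hPderiv s hs).deriv)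
  have hdP : DifferentiableAt ℝ P t := (hPderiv t htτ).differentiableAt
  have hdP2 : DifferentiableAt ℝ (deriv P) t :=
    (hgderiv t htτ).differentiableAt.congr_of_eventuallyEq hEq
  have hP't : deriv P t = g t := (hPderiv t htτ).deriv
  have hd2 : deriv (deriv P) t =
      g t * (((γ - 1) * t - (γ + 1) * (t - τ₁)) / (t * (t - τ₁))) := by
    rw [hEq.deriv_eq]; exact (hgderiv t htτ).deriv
  have hgt : 0 < g t := by
    have hus : 0 < u t := by
      simp only [hu]; exact div_pos (sub_pos.2 htτ) (by positivity)
    have := Real.rpow_pos_of_pos hus (γ - 1)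
    simp only [hg]
    have hτA : 0 < τ₁ / (k * m * t ^ 2) := by positivity
    positivity
  have hMneg : ((γ - 1) * t - (γ + 1) * (t - τ₁)) / (t * (t - τ₁)) < 0 := by
    apply div_neg_of_neg_of_pos
    · nlinarith
    · exact mul_pos ht0 (sub_pos.2 htτ)
  refine ⟨hdP, hdP2, by rw [hd2, hP't], hP't ▸ hgt, hMneg, ?_⟩
  rw [hd2]
  exact mul_neg_of_pos_of_neg hgt hMneg
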